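/- Let 1 < k₁ ≤ k₂ < ∞ and let (h_ℓ)_{ℓ≥0} be a sequence of positive reals with h₀ ≤ 1 and k₁ ≤ h_{ℓ-1}/h_ℓ ≤ k₂ for all ℓ ≥ 1. Let α, β, γ, c₁, c₂, c₃ > 0 satisfy α ≥ ½·min(β,γ) and β = γ. Then there exists a constant C > 0, depending only on α, β, γ, c₁, c₂, c₃, k₁, k₂ and h₀, such that for every ε with 0 < ε < e^{-1} there exist a level L ∈ ℕ and positive integers N₀, …, N_L with: (i) ∑_{ℓ=0}^{L} c₂ h_ℓ^β / N_ℓ + (c₁ h_L^α)² ≤ ε², and (ii) ∑_{ℓ=0}^{L} N_ℓ · c₃ h_ℓ^{-γ} ≤ C ε^{-2} (log ε)². -/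

import Mathlib

set_option maxHeartbeats 1000000 in
/-- Abstract multilevel Monte Carlo complexity theorem, case β = γ. -/
theorem mlmc_complexity_beta_eq_gamma
    (k₁ k₂ : ℝ) (hk₁ : 1 < k₁) (hk₁₂ : k₁ ≤ k₂)
    (h : ℕ → ℝ) (hpos : ∀ ℓ, 0 < h ℓ) (hh0 : h 0 ≤ 1)
    (hlow : ∀ ℓ : ℕ, k₁ ≤ h ℓ / h (ℓ + 1))
    (hhigh : ∀ ℓ : ℕ, h ℓ / h (ℓ + 1) ≤ k₂)
    (α β γ c₁ c₂ c₃ : ℝ)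
    (hα : 0 < α) (hβ : 0 < β) (hγ : 0 < γ)
    (hc₁ : 0 < c₁) (hc₂ : 0 < c₂) (hc₃ : 0 < c₃)
    (hαβγ : α ≥ (1 / 2) * min β γ) (hβγ : β = γ) :
    ∃ C : ℝ, 0 < C ∧ ∀ ε : ℝ, 0 < ε → ε < Real.exp (-1) →
      ∃ (L : ℕ) (N : ℕ → ℕ), (∀ ℓ ≤ L, 0 < N ℓ) ∧
        (∑ ℓ ∈ Finset.range (L + 1), c₂ * h ℓ ^ β / (N ℓ : ℝ)) + (c₁ * h L ^ α) ^ 2 ≤ ε ^ 2 ∧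
        (∑ ℓ ∈ Finset.range (L + 1), (N ℓ : ℝ) * (c₃ * h ℓ ^ (-γ))) ≤ C * ε ^ (-2 : ℝ) * Real.log ε ^ 2 := by
  classical
  subst hβγ
  rw [min_self] at hαβγ
  have hβ2α : β ≤ 2 * α := by linarith
  have hk₁0 : (0 : ℝ) < k₁ := by linarith
  have hk₂0 : (0 : ℝ) < k₂ := by linarith
  have hlogk₁ : 0 < Real.log k₁ := Real.log_pos hk₁
  set s : ℝ := Real.sqrt 2 * c₁ with hs_def
  have hs : 0 < s := by positivity
  set A₀ : ℝ := (|Real.log s| + 1) / (α * Real.log k₁) with hA₀_def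
  have hA₀ : 0 < A₀ := by positivity
  set A : ℝ := A₀ + 2 with hA_def
  have hA : 0 < A := by positivity
  set E : ℝ := max (h 0 ^ (-β)) (k₂ ^ β * s ^ (β / α)) with hE_def
  have hE : 0 < E := lt_max_of_lt_left (Real.rpow_pos_of_pos (hpos 0) _)
  refine ⟨A ^ 2 * (2 * c₂ * c₃ + c₃ * E), by positivity, ?_⟩
  intro ε hε hεe
  have hε1 : ε < 1 := hεe.trans (by rw [Real.exp_lt_one_iff]; norm_num)
  have hε2 : (0:ℝ) < ε ^ 2 := by positivity
  have hlogε : Real.log ε < -1 := by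
    have := Real.log_lt_log hε hεe
    rwa [Real.log_exp] at this
  have hnl : 1 ≤ -Real.log ε := by linarith
  -- basic facts about h
  have hstep : ∀ ℓ, k₁ * h (ℓ + 1) ≤ h ℓ := fun ℓ => by
    have := (le_div_iff₀ (hpos (ℓ + 1))).mp (hlow ℓ); linarith
  have hmono : ∀ ℓ, h (ℓ + 1) ≤ h ℓ := fun ℓ => by
    have h1 := hstep ℓ
    nlinarith [hpos (ℓ + 1)]
  have hanti : ∀ m n, m ≤ n → h n ≤ h m := by
    intro m n hmn
    induction n, hmn using Nat.le_induction with
    | base => exact le_refl _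
    | succ n hmn ih => exact (hmono n).trans ih
  have hgeo : ∀ ℓ, h ℓ ≤ (k₁ ^ ℓ)⁻¹ := by
    intro ℓ
    have key : h ℓ * k₁ ^ ℓ ≤ 1 := by
      induction ℓ with
      | zero => simpa using hh0
      | succ n ih =>
        have h1 := hstep n
        have h2 : (0:ℝ) < k₁ ^ n := by positivity
        calc h (n+1) * k₁ ^ (n+1) = (k₁ * h (n+1)) * k₁ ^ n := by ring
          _ ≤ h n * k₁ ^ n := by nlinarith
          _ ≤ 1 := ih
    have h2 : (0:ℝ) < k₁ ^ ℓ := by positivity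
    rw [← one_div, le_div_iff₀ h2]
    exact key
  -- target mesh size
  set δ : ℝ := (ε / s) ^ (α⁻¹) with hδ_def
  have hδ : 0 < δ := Real.rpow_pos_of_pos (by positivity) _
  have hδα : δ ^ α = ε / s := by
    rw [hδ_def, ← Real.rpow_mul (by positivity), inv_mul_cancel₀ hα.ne', Real.rpow_one]
  have hex : ∃ n, h n ≤ δ := by
    obtain ⟨n, hn⟩ := exists_pow_lt_of_lt_one hδ (inv_lt_one_of_one_lt₀ hk₁)
    refine ⟨n, le_of_lt (lt_of_le_of_lt ?_ hn)⟩
    rw [inv_pow]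
    exact hgeo n
  obtain ⟨L, hLδ, hLmin⟩ : ∃ L, h L ≤ δ ∧ ∀ m < L, δ < h m :=
    ⟨Nat.find hex, Nat.find_spec hex, fun m hm => lt_of_not_ge (Nat.find_min hex hm)⟩
  set N : ℕ → ℕ := fun ℓ => ⌈2 * ((L : ℝ) + 1) * c₂ * h ℓ ^ β / ε ^ 2⌉₊ with hN_def
  have hNpos : ∀ ℓ, 0 < N ℓ := by
    intro ℓ
    rw [hN_def, Nat.ceil_pos]
    have := Real.rpow_pos_of_pos (hpos ℓ) β
    positivity
  have hL1 : (1:ℝ) ≤ (L:ℝ) + 1 := by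
    have : (0:ℝ) ≤ (L:ℝ) := Nat.cast_nonneg L
    linarith
  have hrpow2 : ε ^ (-2:ℝ) = 1 / ε ^ 2 := by
    rw [Real.rpow_neg hε.le, one_div, show ((2:ℝ)) = ((2:ℕ):ℝ) by norm_num,
      Real.rpow_natCast]
  refine ⟨L, N, fun ℓ _ => hNpos ℓ, ?_, ?_⟩
  · -- accuracy
    have hbias : (c₁ * h L ^ α) ^ 2 ≤ ε ^ 2 / 2 := by
      have h1 : h L ^ α ≤ δ ^ α := Real.rpow_le_rpow (hpos L).le hLδ hα.le
      rw [hδα] at h1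
      have hsq2 : (0:ℝ) < Real.sqrt 2 := by positivity
      have h2 : c₁ * h L ^ α ≤ ε / Real.sqrt 2 := by
        calc c₁ * h L ^ α ≤ c₁ * (ε / s) :=
              mul_le_mul_of_nonneg_left h1 hc₁.le
          _ = ε / Real.sqrt 2 := by rw [hs_def]; field_simp
      have h3 : (0:ℝ) ≤ c₁ * h L ^ α := by
        have := Real.rpow_pos_of_pos (hpos L) α; positivity
      have h4 : (ε / Real.sqrt 2) ^ 2 = ε ^ 2 / 2 := by
        rw [div_pow, Real.sq_sqrt (by norm_num : (0:ℝ) ≤ 2)]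
      calc (c₁ * h L ^ α) ^ 2 ≤ (ε / Real.sqrt 2) ^ 2 := by nlinarith
        _ = ε ^ 2 / 2 := h4
    have hsum1 : (∑ ℓ ∈ Finset.range (L + 1), c₂ * h ℓ ^ β / (N ℓ : ℝ)) ≤ ε ^ 2 / 2 := by
      have hterm : ∀ ℓ ∈ Finset.range (L + 1),
          c₂ * h ℓ ^ β / (N ℓ : ℝ) ≤ ε ^ 2 / (2 * ((L:ℝ) + 1)) := by
        intro ℓ _
        have hb : (0:ℝ) < h ℓ ^ β := Real.rpow_pos_of_pos (hpos ℓ) β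
        have hX : (0:ℝ) < 2 * ((L:ℝ) + 1) * c₂ * h ℓ ^ β / ε ^ 2 := by positivity
        have hle : 2 * ((L:ℝ) + 1) * c₂ * h ℓ ^ β / ε ^ 2 ≤ (N ℓ : ℝ) := Nat.le_ceil _
        calc c₂ * h ℓ ^ β / (N ℓ : ℝ)
            ≤ c₂ * h ℓ ^ β / (2 * ((L:ℝ) + 1) * c₂ * h ℓ ^ β / ε ^ 2) := by
              gcongr
          _ = ε ^ 2 / (2 * ((L:ℝ) + 1)) := by
              field_simp
      calc (∑ ℓ ∈ Finset.range (L + 1), c₂ * h ℓ ^ β / (N ℓ : ℝ))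
          ≤ ∑ _ℓ ∈ Finset.range (L + 1), ε ^ 2 / (2 * ((L:ℝ) + 1)) :=
            Finset.sum_le_sum hterm
        _ = ((L:ℝ) + 1) * (ε ^ 2 / (2 * ((L:ℝ) + 1))) := by
            rw [Finset.sum_const, Finset.card_range, nsmul_eq_mul]; push_cast; ring
        _ = ε ^ 2 / 2 := by
            have : (L:ℝ) + 1 ≠ 0 := by positivity
            field_simp
    linarith
  · -- cost
    have hEε : h L ^ (-β) ≤ E / ε ^ 2 := by
      rcases L with _ | L'
      · have h1 : h 0 ^ (-β) ≤ E := le_max_left _ _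
        calc h 0 ^ (-β) ≤ E := h1
          _ ≤ E / ε ^ 2 := by
            rw [le_div_iff₀ hε2]
            have hε21 : ε ^ 2 ≤ 1 := by nlinarith
            nlinarith [hE]
      · have hL' : δ < h L' := hLmin L' (Nat.lt_succ_self L')
        have hk2s : h L' ≤ k₂ * h (L' + 1) := by
          have := (div_le_iff₀ (hpos (L' + 1))).mp (hhigh L'); linarith
        have hδk : δ / k₂ < h (L' + 1) := by
          rw [div_lt_iff₀ hk₂0]; nlinarith
        have hδk0 : (0:ℝ) < δ / k₂ := by positivity
        have h1 : h (L' + 1) ^ (-β) ≤ (δ / k₂) ^ (-β) := by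
          rw [Real.rpow_neg (hpos _).le, Real.rpow_neg hδk0.le]
          exact inv_anti₀ (Real.rpow_pos_of_pos hδk0 β)
            (Real.rpow_le_rpow hδk0.le hδk.le hβ.le)
        have h2 : (δ / k₂) ^ (-β) = k₂ ^ β * δ ^ (-β) := by
          rw [Real.div_rpow hδ.le hk₂0.le, Real.rpow_neg hδ.le, Real.rpow_neg hk₂0.le]
          have hk2β : (0:ℝ) < k₂ ^ β := Real.rpow_pos_of_pos hk₂0 β
          field_simp
        have h3 : δ ^ (-β) = (ε / s) ^ (-(β / α)) := by
          rw [hδ_def, ← Real.rpow_mul (by positivity)]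
          congr 1
          field_simp
        have h4 : (ε / s) ^ (-(β / α)) = s ^ (β / α) * ε ^ (-(β / α)) := by
          rw [Real.rpow_neg (by positivity), Real.div_rpow hε.le hs.le, inv_div,
            Real.rpow_neg hε.le, div_eq_mul_inv]
        have h5 : ε ^ (-(β / α)) ≤ ε ^ (-2 : ℝ) := by
          apply Real.rpow_le_rpow_of_exponent_ge hε hε1.le
          rw [neg_le_neg_iff, div_le_iff₀ hα]
          linarith
        have hsβα : (0:ℝ) < s ^ (β / α) := Real.rpow_pos_of_pos hs _
        have hk2β : (0:ℝ) < k₂ ^ β := Real.rpow_pos_of_pos hk₂0 β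
        calc h (L' + 1) ^ (-β) ≤ k₂ ^ β * δ ^ (-β) := h1.trans_eq h2
          _ = k₂ ^ β * (s ^ (β / α) * ε ^ (-(β / α))) := by rw [h3, h4]
          _ ≤ k₂ ^ β * (s ^ (β / α) * ε ^ (-2:ℝ)) :=
              mul_le_mul_of_nonneg_left (mul_le_mul_of_nonneg_left h5 hsβα.le) hk2β.le
          _ = (k₂ ^ β * s ^ (β / α)) * (1 / ε ^ 2) := by rw [hrpow2]; ring
          _ ≤ E / ε ^ 2 := by
              have hle : k₂ ^ β * s ^ (β / α) ≤ E := le_max_right _ _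
              rw [div_eq_mul_one_div E]
              have : (0:ℝ) < 1 / ε ^ 2 := by positivity
              nlinarith
    have hcost : ∀ ℓ ∈ Finset.range (L + 1),
        (N ℓ : ℝ) * (c₃ * h ℓ ^ (-β)) ≤ (2 * ((L:ℝ) + 1) * c₂ * c₃ + c₃ * E) / ε ^ 2 := by
      intro ℓ hℓ
      have hℓL : ℓ ≤ L := Nat.lt_succ_iff.mp (Finset.mem_range.mp hℓ)
      have hb : (0:ℝ) < h ℓ ^ β := Real.rpow_pos_of_pos (hpos ℓ) β
      have hbn : (0:ℝ) < h ℓ ^ (-β) := Real.rpow_pos_of_pos (hpos ℓ) _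
      have hceil : (N ℓ : ℝ) ≤ 2 * ((L:ℝ) + 1) * c₂ * h ℓ ^ β / ε ^ 2 + 1 :=
        (Nat.ceil_lt_add_one (by positivity)).le
      have hcancel : h ℓ ^ β * h ℓ ^ (-β) = 1 := by
        rw [← Real.rpow_add (hpos ℓ)]; simp
      have hmonoβ : h ℓ ^ (-β) ≤ h L ^ (-β) := by
        rw [Real.rpow_neg (hpos ℓ).le, Real.rpow_neg (hpos L).le]
        exact inv_anti₀ (Real.rpow_pos_of_pos (hpos L) β)
          (Real.rpow_le_rpow (hpos L).le (hanti ℓ L hℓL) hβ.le)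
      calc (N ℓ : ℝ) * (c₃ * h ℓ ^ (-β))
          ≤ (2 * ((L:ℝ) + 1) * c₂ * h ℓ ^ β / ε ^ 2 + 1) * (c₃ * h ℓ ^ (-β)) := by
            apply mul_le_mul_of_nonneg_right hceil (by positivity)
        _ = 2 * ((L:ℝ) + 1) * c₂ * c₃ / ε ^ 2 * (h ℓ ^ β * h ℓ ^ (-β)) + c₃ * h ℓ ^ (-β) := by
            ring
        _ = 2 * ((L:ℝ) + 1) * c₂ * c₃ / ε ^ 2 + c₃ * h ℓ ^ (-β) := by rw [hcancel]; ring
        _ ≤ 2 * ((L:ℝ) + 1) * c₂ * c₃ / ε ^ 2 + c₃ * (E / ε ^ 2) := by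
            have := hmonoβ.trans hEε
            nlinarith
        _ = (2 * ((L:ℝ) + 1) * c₂ * c₃ + c₃ * E) / ε ^ 2 := by ring
    have hLbound : (L:ℝ) + 1 ≤ A * (-Real.log ε) := by
      rcases L with _ | L'
      · push_cast
        rw [hA_def]
        have h11 : (0:ℝ) ≤ A₀ * (-Real.log ε) := mul_nonneg hA₀.le (by linarith)
        have h12 : (A₀ + 2) * (-Real.log ε) = A₀ * (-Real.log ε) + 2 * (-Real.log ε) := by
          ring
        linarith
      · have hL' : δ < h L' := hLmin L' (Nat.lt_succ_self L')
        have hδL : δ < (k₁ ^ L')⁻¹ := lt_of_lt_of_le hL' (hgeo L')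
        have hlogδ : Real.log δ < -((L':ℝ) * Real.log k₁) := by
          have h1 := Real.log_lt_log hδ hδL
          rwa [Real.log_inv, Real.log_pow] at h1
        have hlogδ_eq : Real.log δ = α⁻¹ * (Real.log ε - Real.log s) := by
          rw [hδ_def, Real.log_rpow (by positivity), Real.log_div hε.ne' hs.ne']
        have h7 : (L':ℝ) * Real.log k₁ < α⁻¹ * (Real.log s - Real.log ε) := by
          rw [hlogδ_eq] at hlogδ
          have : α⁻¹ * (Real.log ε - Real.log s) = -(α⁻¹ * (Real.log s - Real.log ε)) := by
            ring
          linarith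
        have h8 : Real.log s - Real.log ε ≤ (|Real.log s| + 1) * (-Real.log ε) := by
          have h9 : Real.log s ≤ |Real.log s| := le_abs_self _
          nlinarith [abs_nonneg (Real.log s)]
        have h10 : (L':ℝ) ≤ A₀ * (-Real.log ε) := by
          rw [hA₀_def, div_mul_eq_mul_div, le_div_iff₀ (by positivity)]
          calc (L':ℝ) * (α * Real.log k₁) = α * ((L':ℝ) * Real.log k₁) := by ring
            _ ≤ α * (α⁻¹ * (Real.log s - Real.log ε)) :=
              mul_le_mul_of_nonneg_left h7.le hα.le
            _ = Real.log s - Real.log ε := by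
              rw [← mul_assoc, mul_inv_cancel₀ hα.ne', one_mul]
            _ ≤ (|Real.log s| + 1) * (-Real.log ε) := h8
        push_cast
        rw [hA_def]
        have h12 : (A₀ + 2) * (-Real.log ε) = A₀ * (-Real.log ε) + 2 * (-Real.log ε) := by
          ring
        linarith
    calc (∑ ℓ ∈ Finset.range (L + 1), (N ℓ : ℝ) * (c₃ * h ℓ ^ (-β)))
        ≤ ∑ _ℓ ∈ Finset.range (L + 1), (2 * ((L:ℝ) + 1) * c₂ * c₃ + c₃ * E) / ε ^ 2 :=
          Finset.sum_le_sum hcost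
      _ = ((L:ℝ) + 1) * ((2 * ((L:ℝ) + 1) * c₂ * c₃ + c₃ * E) / ε ^ 2) := by
          rw [Finset.sum_const, Finset.card_range, nsmul_eq_mul]; push_cast; ring
      _ = ((L:ℝ) + 1) * (2 * ((L:ℝ) + 1) * c₂ * c₃ + c₃ * E) / ε ^ 2 := by ring
      _ ≤ (A * (-Real.log ε)) ^ 2 * (2 * c₂ * c₃ + c₃ * E) / ε ^ 2 := by
          rw [div_le_div_iff_of_pos_right hε2]
          have hy1 : (1:ℝ) ≤ A * (-Real.log ε) := hL1.trans hLbound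
          have hsq : ((L:ℝ)+1)*((L:ℝ)+1) ≤ (A*(-Real.log ε))*(A*(-Real.log ε)) :=
            mul_le_mul hLbound hLbound (by linarith) (by linarith)
          have hxy2 : ((L:ℝ)+1) ≤ (A*(-Real.log ε))*(A*(-Real.log ε)) :=
            hLbound.trans (le_mul_of_one_le_left (by linarith) hy1)
          have e1 := mul_le_mul_of_nonneg_left hsq (by positivity : (0:ℝ) ≤ 2*c₂*c₃)
          have e2 := mul_le_mul_of_nonneg_left hxy2 (by positivity : (0:ℝ) ≤ c₃*E)
          rw [pow_two]
          linarith [e1, e2]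
      _ = A ^ 2 * (2 * c₂ * c₃ + c₃ * E) * ε ^ (-2:ℝ) * Real.log ε ^ 2 := by
          rw [hrpow2]; ring
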